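/- arXiv:0902.1394 — 5 statements merged into one kernel-verified Lean document; each statement's English description precedes it below -/
import Mathlib

section
/- Fix integers k ≥ U ≥ 1 and t ≥ 0. For every serialized single-chunk dissemination schedule (V, par, rank, rec), the number of peers that complete reception of the chunk within t time units satisfies |{v ∈ V : rec v ≤ t}| ≤ ∑_{j=1}^{U} S_k(t−j+1). -/
/-- Value of the k-step Fibonacci sequence at natural indices. -/
def FkNat (k : ℕ) : ℕ → ℕ
  | 0 => 0
  | 1 => 1
  | n + 2 => ∑ j ∈ Finset.range k, FkNat k (n + 1 - j)
decreasing_by omega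

/-- The k-step Fibonacci sequence `F_k : ℤ → ℕ`:
`F_k i = 0` for `i ≤ 0`, `F_k 1 = 1`, and `F_k i = ∑_{j=1}^{k} F_k (i - j)` for `i > 1`. -/
def Fk (k : ℕ) (i : ℤ) : ℕ := if i ≤ 0 then 0 else FkNat k i.toNat

/-- The k-step Fibonacci sum `S_k n = ∑_{i=1}^{n} F_k i` (zero for `n ≤ 0`). -/
noncomputable def Sk (k : ℕ) (n : ℤ) : ℕ := ∑ i ∈ Finset.Icc (1 : ℤ) n, Fk k i

lemma Fk_nonpos (k : ℕ) (i : ℤ) (h : i ≤ 0) : Fk k i = 0 := by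
  simp only [Fk, if_pos h]

lemma Fk_natCast (k n : ℕ) : Fk k (n : ℤ) = FkNat k n := by
  simp only [Fk, Int.toNat_natCast]
  split
  · have : n = 0 := by omega
    simp [this, FkNat]
  · rfl

lemma Fk_one (k : ℕ) : Fk k 1 = 1 := by
  rw [show (1:ℤ) = ((1:ℕ):ℤ) from rfl, Fk_natCast]
  simp [FkNat]

lemma Sk_nonpos (k : ℕ) (n : ℤ) (h : n ≤ 0) : Sk k n = 0 := by
  unfold Sk
  rw [Finset.Icc_eq_empty (by omega)]
  simp

lemma sum_Fk (k : ℕ) (a b : ℤ) (ha : a ≤ 1) :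
    ∑ i ∈ Finset.Icc a b, Fk k i = Sk k b := by
  unfold Sk
  refine (Finset.sum_subset (Finset.Icc_subset_Icc_left ha) ?_).symm
  intro x hx hx'
  simp only [Finset.mem_Icc] at hx hx'
  exact Fk_nonpos k x (by omega)

lemma Fk_rec (k : ℕ) (i : ℤ) (hi : 2 ≤ i) :
    Fk k i = ∑ r ∈ Finset.Icc 1 k, Fk k (i - (r:ℤ)) := by
  obtain ⟨m, rfl⟩ : ∃ m : ℕ, i = (m : ℤ) + 2 := ⟨(i - 2).toNat, by omega⟩
  have h1 : ((m:ℤ) + 2) = ((m + 2 : ℕ) : ℤ) := by push_cast; ring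
  rw [h1, Fk_natCast]
  rw [show FkNat k (m+2) = ∑ j ∈ Finset.range k, FkNat k (m + 1 - j) from by rw [FkNat]]
  refine Finset.sum_nbij' (fun j => j + 1) (fun r => r - 1) ?_ ?_ ?_ ?_ ?_
  · intro a ha; simp only [Finset.mem_range] at ha; simp only [Finset.mem_Icc]; omega
  · intro a ha; simp only [Finset.mem_Icc] at ha; simp only [Finset.mem_range]; omega
  · intro a _; show a + 1 - 1 = a; omega
  · intro a ha; simp only [Finset.mem_Icc] at ha; show a - 1 + 1 = a; omega
  · intro j hj
    simp only [Finset.mem_range] at hj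
    rcases le_or_gt j m with h | h
    · have h2 : ((m+2:ℕ):ℤ) - ((j + 1 : ℕ):ℤ) = ((m + 1 - j : ℕ) : ℤ) := by push_cast; omega
      rw [h2, Fk_natCast]
    · have h2 : m + 1 - j = 0 := by omega
      have h3 : ((m+2:ℕ):ℤ) - ((j+1:ℕ):ℤ) ≤ 0 := by push_cast; omega
      rw [h2, Fk_nonpos k _ h3]
      simp [FkNat]

lemma Sk_rec (k : ℕ) (n : ℤ) :
    Sk k n = (if 1 ≤ n then 1 else 0) + ∑ r ∈ Finset.Icc 1 k, Sk k (n - (r:ℤ)) := by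
  by_cases h : 1 ≤ n
  · rw [if_pos h]
    have hsplit : Finset.Icc (1:ℤ) n = insert 1 (Finset.Icc 2 n) := by
      ext x; simp only [Finset.mem_insert, Finset.mem_Icc]; omega
    conv_lhs => rw [Sk]
    rw [hsplit, Finset.sum_insert (by simp [Finset.mem_Icc]), Fk_one]
    congr 1
    rw [Finset.sum_congr rfl (fun i hi => Fk_rec k i (Finset.mem_Icc.mp hi).1)]
    rw [Finset.sum_comm]
    apply Finset.sum_congr rfl
    intro r hr
    have hr1 : 1 ≤ r := (Finset.mem_Icc.mp hr).1
    have hmap : Finset.Icc (2:ℤ) n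
        = Finset.map (addRightEmbedding (r:ℤ)) (Finset.Icc (2 - (r:ℤ)) (n - (r:ℤ))) := by
      rw [Finset.map_add_right_Icc]; congr 1 <;> ring
    rw [hmap, Finset.sum_map]
    rw [← sum_Fk k (2 - (r:ℤ)) (n - (r:ℤ)) (by omega)]
    apply Finset.sum_congr rfl
    intro m hm
    congr 1
    simp [addRightEmbedding]
  · rw [if_neg h, Sk_nonpos k n (by omega), Finset.sum_eq_zero (fun r hr =>
      Sk_nonpos k _ (by have := (Finset.mem_Icc.mp hr).1; omega))]
    simp

/-- Upper bound on the stream diffusion metric: in any serialized single-chunk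
dissemination schedule with normalized upload capacity `U` and at most `k` neighbors,
the number of peers that complete reception of the chunk within `t` time units is at
most `∑_{j=1}^{U} S_k (t - j + 1)`. -/
theorem stream_diffusion_upper_bound
    (k U : ℕ) (hU : 1 ≤ U) (hUk : U ≤ k) (t : ℕ)
    (V : Type) [Fintype V] [DecidableEq V]
    (par : V → Option V) (rank rec : V → ℕ)
    (hrank_pos : ∀ v, 1 ≤ rank v)
    (hrank_inj : ∀ v w, v ≠ w → par v = par w → rank v ≠ rank w)
    (hrank_src : ∀ v, par v = none → rank v ≤ U)
    (hrank_peer : ∀ v p, par v = some p → rank v ≤ k)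
    (hrec_src : ∀ v, par v = none → rank v ≤ rec v)
    (hrec_peer : ∀ v p, par v = some p → rec p + rank v ≤ rec v) :
    (Finset.univ.filter fun v => rec v ≤ t).card ≤
      ∑ j ∈ Finset.Icc 1 U, Sk k ((t : ℤ) - (j : ℤ) + 1) := by
  classical
  set B : ℤ → ℕ := fun s => ∑ j ∈ Finset.Icc 1 U, Sk k (s - (j:ℤ) + 1) with hB
  set N : ℤ → ℕ := fun s => (Finset.univ.filter fun v => (rec v : ℤ) ≤ s).card with hN
  have hN_nonpos : ∀ s : ℤ, s < 0 → N s = 0 := by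
    intro s hs
    rw [hN]
    simp only
    rw [Finset.card_eq_zero, Finset.filter_eq_empty_iff]
    intro v _
    omega
  have key : ∀ n : ℕ, N (n:ℤ) ≤ B (n:ℤ) := by
    intro n
    induction n using Nat.strong_induction_on with
    | _ n ih =>
    set Q : Option V → ℕ → Prop := fun o r =>
      o.elim (r ≤ U ∧ r ≤ n) (fun p => rec p + r ≤ n) with hQ
    set T : Finset (Option V × ℕ) :=
      Finset.univ.biUnion (fun o =>
        ((Finset.Icc 1 k).filter fun r => Q o r).image fun r => (o, r)) with hT
    have hstep : N (n:ℤ) ≤ T.card := by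
      rw [hN]
      simp only
      apply Finset.card_le_card_of_injOn (fun v => (par v, rank v))
      · intro v hv
        simp only [Finset.coe_filter, Finset.mem_coe, Finset.mem_filter, Finset.mem_univ, true_and, Set.mem_setOf_eq] at hv ⊢
        have hvn : rec v ≤ n := by omega
        rw [hT]
        apply Finset.mem_biUnion.mpr
        refine ⟨par v, Finset.mem_univ _, Finset.mem_image.mpr ⟨rank v, ?_, rfl⟩⟩
        simp only [Finset.mem_filter, Finset.mem_Icc, hQ]
        cases hp : par v with
        | none =>
          have h1 := hrank_src v hp
          have h2 := hrec_src v hp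
          exact ⟨⟨hrank_pos v, le_trans h1 hUk⟩, ⟨h1, by omega⟩⟩
        | some p =>
          have h1 := hrank_peer v p hp
          have h2 := hrec_peer v p hp
          exact ⟨⟨hrank_pos v, h1⟩, by simp only [Option.elim]; omega⟩
      · intro v hv w hw hvw
        by_contra hne
        exact hrank_inj v w hne (congrArg Prod.fst hvw) (congrArg Prod.snd hvw)
    have hcard : T.card = ((Finset.Icc 1 U).filter fun r => r ≤ n).card
        + ∑ r ∈ Finset.Icc 1 k, N ((n:ℤ) - (r:ℤ)) := by
      rw [hT, Finset.card_biUnion]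
      · have himg : ∀ o : Option V,
            (((Finset.Icc 1 k).filter fun r => Q o r).image fun r => (o, r)).card
            = ((Finset.Icc 1 k).filter fun r => Q o r).card := by
          intro o
          apply Finset.card_image_of_injective
          intro a b hab
          exact (Prod.ext_iff.mp hab).2
        simp only [himg]
        rw [Fintype.sum_option]
        congr 1
        · congr 1
          ext r
          simp only [Finset.mem_filter, Finset.mem_Icc, hQ, Option.elim]
          omega
        · have h1 : ∀ p : V, ((Finset.Icc 1 k).filter fun r => Q (some p) r).card
              = ∑ r ∈ Finset.Icc 1 k, if Q (some p) r then 1 else 0 := by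
            intro p; rw [Finset.card_filter]
          simp only [h1]
          rw [Finset.sum_comm]
          apply Finset.sum_congr rfl
          intro r _
          rw [hN]
          simp only
          rw [Finset.card_filter]
          apply Finset.sum_congr rfl
          intro p _
          have : Q (some p) r ↔ ((rec p : ℤ) ≤ (n:ℤ) - (r:ℤ)) := by
            simp only [hQ, Option.elim]
            omega
          simp only [this]
      · intro x _ y _ hxy
        simp only [Finset.disjoint_left]
        intro a ha hb
        simp only [Finset.mem_image] at ha hb
        obtain ⟨r1, _, hr1⟩ := ha
        obtain ⟨r2, _, hr2⟩ := hb
        exact hxy (congrArg Prod.fst (hr1.trans hr2.symm))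
    have hIH : ∑ r ∈ Finset.Icc 1 k, N ((n:ℤ) - (r:ℤ))
        ≤ ∑ r ∈ Finset.Icc 1 k, B ((n:ℤ) - (r:ℤ)) := by
      apply Finset.sum_le_sum
      intro r hr
      simp only [Finset.mem_Icc] at hr
      rcases le_or_gt r n with h | h
      · have hcast : ((n:ℤ) - (r:ℤ)) = ((n - r : ℕ) : ℤ) := by omega
        rw [hcast]
        exact ih (n - r) (by omega)
      · rw [hN_nonpos _ (by omega)]
        exact Nat.zero_le _
    have hBrec : B (n:ℤ) = ((Finset.Icc 1 U).filter fun j => j ≤ n).card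
        + ∑ r ∈ Finset.Icc 1 k, B ((n:ℤ) - (r:ℤ)) := by
      rw [hB]
      simp only
      have e1 : ∑ j ∈ Finset.Icc 1 U, Sk k ((n:ℤ) - (j:ℤ) + 1)
          = ∑ j ∈ Finset.Icc 1 U, ((if 1 ≤ (n:ℤ) - (j:ℤ) + 1 then 1 else 0)
            + ∑ r ∈ Finset.Icc 1 k, Sk k ((n:ℤ) - (j:ℤ) + 1 - (r:ℤ))) :=
        Finset.sum_congr rfl (fun j _ => Sk_rec k ((n:ℤ) - (j:ℤ) + 1))
      rw [e1, Finset.sum_add_distrib]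
      congr 1
      · rw [Finset.card_filter]
        apply Finset.sum_congr rfl
        intro j hj
        have : (1 ≤ (n:ℤ) - (j:ℤ) + 1) ↔ (j ≤ n) := by omega
        simp only [this]
      · rw [Finset.sum_comm]
        apply Finset.sum_congr rfl
        intro r _
        apply Finset.sum_congr rfl
        intro j _
        congr 1
        ring
    calc N (n:ℤ) ≤ T.card := hstep
      _ = _ := hcard
      _ ≤ ((Finset.Icc 1 U).filter fun j => j ≤ n).card
          + ∑ r ∈ Finset.Icc 1 k, B ((n:ℤ) - (r:ℤ)) := by
        exact Nat.add_le_add_left hIH _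
      _ = B (n:ℤ) := hBrec.symm
  have hfinal : (Finset.univ.filter fun v => rec v ≤ t)
      = (Finset.univ.filter fun v => (rec v:ℤ) ≤ (t:ℤ)) := by
    apply Finset.filter_congr
    intro v _
    constructor <;> intro <;> omega
  calc (Finset.univ.filter fun v => rec v ≤ t).card
      = N (t:ℤ) := by rw [hfinal, hN]
    _ ≤ B (t:ℤ) := key t
    _ = _ := by rw [hB]
end

section
/- Fix integers U ≥ 1 and t ≥ U. For every unconstrained serialized single-chunk dissemination schedule (V, par, rank, rec) (i.e., with no upper limit k on the ranks of peers served by other peers), the number of peers completing reception within t time units satisfies |{v ∈ V : rec v ≤ t}| ≤ 2^t − 2^{t−U} = 2^t (1 − 2^{−U}). -/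
lemma geom_aux (d : ℕ) : ∀ m, m ≤ d → ∑ r ∈ Finset.Ico 1 (m+1), 2^(d-r) = 2^d - 2^(d-m) := by
  intro m
  induction m with
  | zero => simp
  | succ n ih =>
    intro h
    rw [Finset.sum_Ico_succ_top (by omega), ih (by omega)]
    have h1 : 2^(d-n) = 2 * 2^(d-(n+1)) := by
      rw [← pow_succ']
      congr 1
      omega
    have h2 : 2^(d-n) ≤ 2^d := Nat.pow_le_pow_right (by norm_num) (by omega)
    omega

lemma sum_pow_le {V : Type} [DecidableEq V] (G : Finset V) (rank : V → ℕ) (e : V → ℕ)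
    (d m : ℕ) (hm : m ≤ d) (hinj : Set.InjOn rank G)
    (hmem : ∀ v ∈ G, rank v ∈ Finset.Ico 1 (m+1))
    (he : ∀ v ∈ G, e v ≤ d - rank v) :
    ∑ v ∈ G, 2^(e v) ≤ 2^d - 2^(d-m) := by
  calc ∑ v ∈ G, 2^(e v) ≤ ∑ v ∈ G, 2^(d - rank v) :=
        Finset.sum_le_sum fun v hv => Nat.pow_le_pow_right (by norm_num) (he v hv)
    _ = ∑ r ∈ G.image rank, 2^(d - r) := by
        rw [Finset.sum_image]
        intro x hx y hy h
        exact hinj (by simpa using hx) (by simpa using hy) h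
    _ ≤ ∑ r ∈ Finset.Ico 1 (m+1), 2^(d-r) := by
        apply Finset.sum_le_sum_of_subset
        intro r hr
        obtain ⟨v, hv, rfl⟩ := Finset.mem_image.mp hr
        exact hmem v hv
    _ = 2^d - 2^(d-m) := geom_aux d m hm


/-- Upper bound on the stream diffusion metric with no limit on the number of neighbors
(`k → ∞`): in any unconstrained serialized single-chunk dissemination schedule with
normalized upload capacity `U`, the number of peers completing reception within
`t ≥ U` time units is at most `2^t - 2^(t-U) = 2^t (1 - 2^{-U})`. -/
theorem stream_diffusion_upper_bound_unconstrained
    (U : ℕ) (hU : 1 ≤ U) (t : ℕ) (ht : U ≤ t)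
    (V : Type) [Fintype V] [DecidableEq V]
    (par : V → Option V) (rank rec : V → ℕ)
    (hrank_pos : ∀ v, 1 ≤ rank v)
    (hrank_inj : ∀ v w, v ≠ w → par v = par w → rank v ≠ rank w)
    (hrank_src : ∀ v, par v = none → rank v ≤ U)
    (hrec_src : ∀ v, par v = none → rank v ≤ rec v)
    (hrec_peer : ∀ v p, par v = some p → rec p + rank v ≤ rec v) :
    (Finset.univ.filter fun v => rec v ≤ t).card ≤ 2 ^ t - 2 ^ (t - U) := by
  classical
  set F : Finset V := Finset.univ.filter fun v => rec v ≤ t with hF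
  have hmemF : ∀ v, v ∈ F ↔ rec v ≤ t := by
    intro v; simp [hF]
  set S : ℕ := ∑ v ∈ F, 2^(t - rec v) with hS
  -- fiberwise decomposition
  have hfib : ∑ o : Option V, ∑ v ∈ F.filter (fun v => par v = o), 2^(t - rec v) = S :=
    Finset.sum_fiberwise F par _
  have hsplit : ∑ o : Option V, ∑ v ∈ F.filter (fun v => par v = o), 2^(t - rec v)
      = (∑ v ∈ F.filter (fun v => par v = none), 2^(t - rec v))
        + ∑ p : V, ∑ v ∈ F.filter (fun v => par v = some p), 2^(t - rec v) := by
    rw [Fintype.sum_option]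
  -- fibers of parents not in F are empty
  have hzero : ∀ p : V, p ∉ F → ∑ v ∈ F.filter (fun v => par v = some p), 2^(t - rec v) = 0 := by
    intro p hp
    apply Finset.sum_eq_zero
    intro v hv
    exfalso
    rw [Finset.mem_filter] at hv
    have h1 := (hmemF v).mp hv.1
    have h2 := hrec_peer v p hv.2
    have := hrank_pos v
    exact hp ((hmemF p).mpr (by omega))
  have hrestrict : ∑ p : V, ∑ v ∈ F.filter (fun v => par v = some p), 2^(t - rec v)
      = ∑ p ∈ F, ∑ v ∈ F.filter (fun v => par v = some p), 2^(t - rec v) := by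
    symm
    apply Finset.sum_subset (Finset.subset_univ F)
    intro p _ hp
    exact hzero p hp
  -- bound on source fiber
  have hsrc : ∑ v ∈ F.filter (fun v => par v = none), 2^(t - rec v) ≤ 2^t - 2^(t-U) := by
    apply sum_pow_le _ rank _ t U ht
    · intro x hx y hy hxy
      simp only [Finset.coe_filter, Set.mem_setOf_eq, Finset.mem_filter] at hx hy
      by_contra hne
      exact hrank_inj x y hne (hx.2.trans hy.2.symm) hxy
    · intro v hv
      rw [Finset.mem_filter] at hv
      have := hrank_pos v
      have := hrank_src v hv.2
      rw [Finset.mem_Ico]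
      omega
    · intro v hv
      rw [Finset.mem_filter] at hv
      have := hrec_src v hv.2
      omega
  -- bound on each peer fiber
  have hpeer : ∀ p ∈ F, (∑ v ∈ F.filter (fun v => par v = some p), 2^(t - rec v)) + 1
      ≤ 2^(t - rec p) := by
    intro p hp
    have hd : ∑ v ∈ F.filter (fun v => par v = some p), 2^(t - rec v)
        ≤ 2^(t - rec p) - 2^((t - rec p) - (t - rec p)) := by
      apply sum_pow_le _ rank _ (t - rec p) (t - rec p) le_rfl
      · intro x hx y hy hxy
        simp only [Finset.coe_filter, Set.mem_setOf_eq, Finset.mem_filter] at hx hy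
        by_contra hne
        exact hrank_inj x y hne (hx.2.trans hy.2.symm) hxy
      · intro v hv
        rw [Finset.mem_filter] at hv
        have h1 := (hmemF v).mp hv.1
        have h2 := hrec_peer v p hv.2
        have := hrank_pos v
        rw [Finset.mem_Ico]
        omega
      · intro v hv
        rw [Finset.mem_filter] at hv
        have h1 := (hmemF v).mp hv.1
        have h2 := hrec_peer v p hv.2
        omega
    have hone : (1:ℕ) ≤ 2^(t - rec p) := Nat.one_le_two_pow
    simp only [Nat.sub_self, pow_zero] at hd
    omega
  -- put it together
  have hsum : (∑ p ∈ F, ((∑ v ∈ F.filter (fun v => par v = some p), 2^(t - rec v)) + 1))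
      ≤ ∑ p ∈ F, 2^(t - rec p) := Finset.sum_le_sum hpeer
  rw [Finset.sum_add_distrib, Finset.sum_const, smul_eq_mul, mul_one] at hsum
  have key : S + F.card ≤ (2^t - 2^(t-U)) + S := by
    calc S + F.card
        = (∑ v ∈ F.filter (fun v => par v = none), 2^(t - rec v))
          + (∑ p ∈ F, ∑ v ∈ F.filter (fun v => par v = some p), 2^(t - rec v)) + F.card := by
          rw [← hfib, hsplit, hrestrict]
      _ ≤ (2^t - 2^(t-U)) + S := by
          have := hsrc
          omega
  omega
end

section
/- Let s ∈ ℝ and let i ≥ 1 be an integer. Suppose measurable rate functions r_1, …, r_i : ℝ → ℝ satisfy r_j(τ) ≥ 0 for all τ, r_j(τ) = 0 for τ < s, and ∑_{j=1}^{i} r_j(τ) ≤ 1 for all τ, and there are finish times f_1, …, f_i ≥ s with ∫_{s}^{f_j} r_j(τ) dτ = 1 for each j. If max_{1 ≤ j ≤ i} f_j = s + i (i.e., the transmissions achieve the minimum possible completion time), then ∑_{j=1}^{i} r_j(τ) = 1 for almost every τ ∈ [s, s+i]; in particular the node's upload capacity is fully utilized throughout the interval, as happens when the i chunk transmissions are serialized.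 -/
open MeasureTheory intervalIntegral

/-- If `i ≥ 1` unit-size chunk transmissions, starting no earlier than time `s` and
sharing a normalized upload capacity of 1, all complete by the minimum possible time
`s + i` (i.e. `max_j f_j = s + i`), then the upload capacity is fully utilized
throughout `[s, s + i]`: `∑_j r_j(τ) = 1` for almost every `τ ∈ [s, s + i]`,
as happens when the transmissions are serialized. -/
theorem serialized_transmissions_full_utilization
    (s : ℝ) (i : ℕ) (hi : 1 ≤ i)
    (r : Fin i → ℝ → ℝ) (f : Fin i → ℝ)
    (hmeas : ∀ j, Measurable (r j))
    (hnonneg : ∀ j τ, 0 ≤ r j τ)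
    (hzero : ∀ j τ, τ < s → r j τ = 0)
    (hcap : ∀ τ, ∑ j, r j τ ≤ 1)
    (hfs : ∀ j, s ≤ f j)
    (hfull : ∀ j, ∫ τ in s..(f j), r j τ = 1)
    (hmax : Finset.univ.sup' ⟨⟨0, hi⟩, Finset.mem_univ _⟩ f = s + (i : ℝ)) :
    ∀ᵐ τ ∂(volume.restrict (Set.Icc s (s + (i : ℝ)))), ∑ j, r j τ = 1 := by
  set S : Set ℝ := Set.Icc s (s + (i : ℝ)) with hS
  have hfle : ∀ j, f j ≤ s + (i : ℝ) := by
    intro j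
    rw [← hmax]
    exact Finset.le_sup' f (Finset.mem_univ j)
  have hrle1 : ∀ j τ, r j τ ≤ 1 := fun j τ =>
    le_trans (Finset.single_le_sum (fun k _ => hnonneg k τ) (Finset.mem_univ j)) (hcap τ)
  have hint : ∀ j, IntegrableOn (r j) S volume := by
    intro j
    apply Integrable.mono' (integrable_const (1 : ℝ)) (hmeas j).aestronglyMeasurable.restrict
    filter_upwards with τ
    rw [Real.norm_eq_abs, abs_of_nonneg (hnonneg j τ)]
    exact hrle1 j τ
  have hintS : IntegrableOn (fun τ => ∑ j, r j τ) S volume :=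
    integrable_finset_sum _ (fun j _ => hint j)
  -- each ∫_S r j ≥ 1
  have hge1 : ∀ j, (1 : ℝ) ≤ ∫ τ in S, r j τ := by
    intro j
    have h1 : (∫ τ in Set.Ioc s (f j), r j τ) = 1 := by
      rw [← intervalIntegral.integral_of_le (hfs j)]
      exact hfull j
    rw [← h1]
    apply setIntegral_mono_set (hint j)
    · filter_upwards with τ using hnonneg j τ
    · filter_upwards with τ hτ
      exact ⟨le_of_lt hτ.1, le_trans hτ.2 (hfle j)⟩
  have hvol : (volume S).toReal = (i : ℝ) := by
    rw [hS, Real.volume_Icc]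
    simp
  have hsumge : (i : ℝ) ≤ ∫ τ in S, ∑ j, r j τ := by
    rw [integral_finset_sum _ (fun j _ => hint j)]
    calc (i : ℝ) = ∑ _j : Fin i, (1 : ℝ) := by simp
    _ ≤ ∑ j, ∫ τ in S, r j τ := Finset.sum_le_sum (fun j _ => hge1 j)
  have hsumle : (∫ τ in S, ∑ j, r j τ) ≤ (i : ℝ) := by
    have h1 : (∫ τ in S, ∑ j, r j τ) ≤ ∫ τ in S, (1 : ℝ) :=
      setIntegral_mono_on hintS (integrable_const 1) measurableSet_Icc
        (fun τ _ => hcap τ)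
    rwa [setIntegral_const, smul_eq_mul, mul_one, measureReal_def, hvol] at h1
  have heq : (∫ τ in S, ∑ j, r j τ) = (i : ℝ) := le_antisymm hsumle hsumge
  -- conclude 1 - sum = 0 a.e.
  have hint1 : IntegrableOn (fun τ => 1 - ∑ j, r j τ) S volume :=
    (integrable_const 1).sub hintS
  have hzero' : (∫ τ in S, (1 - ∑ j, r j τ)) = 0 := by
    rw [integral_sub (integrable_const 1) hintS, heq, setIntegral_const, smul_eq_mul,
      mul_one, measureReal_def, hvol, sub_self]
  have hae : (fun τ => 1 - ∑ j, r j τ) =ᵐ[volume.restrict S] 0 := by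
    rw [← integral_eq_zero_iff_of_nonneg _ hint1]
    · exact hzero'
    · intro τ
      simpa using hcap τ
  filter_upwards [hae] with τ hτ
  simp only [Pi.zero_apply] at hτ
  linarith
end

section
/- Fix integers k ≥ 1 and t ≥ 0. Then ∑_{i=1}^{t} F_k(i+1) = ∑_{j=1}^{k} S_k(t−j+1). (Consequently, in the case k = U the stream diffusion metric of the unbalanced-tree chunk distribution, N(t) = ∑_{i=1}^{t} F_k(i+1), equals the performance bound ∑_{j=1}^{k} S_k(t−j+1) for every t.) -/
lemma sk_succ (k : ℕ) (n : ℤ) : Sk k n = Sk k (n - 1) + Fk k n := by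
  by_cases h : 1 ≤ n
  · have : Finset.Icc (1 : ℤ) n = insert n (Finset.Icc (1 : ℤ) (n - 1)) := by
      ext x; simp [Finset.mem_Icc]; omega
    rw [Sk, this, Finset.sum_insert (by simp), Sk]
    ring
  · have h1 : Sk k n = 0 := by
      rw [Sk, Finset.Icc_eq_empty (by omega)]; simp
    have h2 : Sk k (n - 1) = 0 := by
      rw [Sk, Finset.Icc_eq_empty (by omega)]; simp
    have h3 : Fk k n = 0 := by rw [Fk, if_pos (by omega)]
    omega

lemma fk_rec (k : ℕ) (i : ℤ) (hi : 2 ≤ i) :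
    Fk k i = ∑ j ∈ Finset.Icc 1 k, Fk k (i - j) := by
  obtain ⟨n, rfl⟩ : ∃ n : ℕ, i = (n : ℤ) + 2 := ⟨(i - 2).toNat, by omega⟩
  rw [Fk, if_neg (by omega)]
  have : ((n : ℤ) + 2).toNat = n + 2 := by omega
  rw [this, FkNat]
  rw [show Finset.Icc 1 k = Finset.map ⟨fun j => j + 1, fun a b h => by simpa using h⟩ (Finset.range k) by
    ext x
    simp only [Finset.mem_Icc, Finset.mem_map, Finset.mem_range, Function.Embedding.coeFn_mk]
    constructor
    · rintro ⟨h1, h2⟩; exact ⟨x - 1, by omega, by show x - 1 + 1 = x; omega⟩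
    · rintro ⟨a, ha, rfl⟩; show 1 ≤ a + 1 ∧ a + 1 ≤ k; omega]
  rw [Finset.sum_map]
  refine Finset.sum_congr rfl fun j hj => ?_
  show FkNat k (n + 1 - j) = Fk k ((n : ℤ) + 2 - ((j : ℕ) + 1 : ℕ))
  symm
  rw [Fk]
  by_cases h : j ≤ n
  · rw [if_neg (by push_cast; omega)]
    congr 1
    omega
  · rw [if_pos (by push_cast; omega)]
    have : n + 1 - j = 0 := by omega
    rw [this, FkNat]

/-- In the case `k = U`, the stream diffusion metric of the unbalanced-tree chunk
distribution equals the performance bound: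
`∑_{i=1}^{t} F_k (i + 1) = ∑_{j=1}^{k} S_k (t - j + 1)` for every `t ≥ 0`. -/
theorem single_tree_metric_eq_bound
    (k : ℕ) (hk : 1 ≤ k) (t : ℕ) :
    ∑ i ∈ Finset.Icc 1 t, Fk k ((i : ℤ) + 1) =
      ∑ j ∈ Finset.Icc 1 k, Sk k ((t : ℤ) - (j : ℤ) + 1) := by
  induction t with
  | zero =>
    simp only [Nat.cast_zero]
    rw [Finset.Icc_eq_empty (by omega), Finset.sum_empty]
    symm
    refine Finset.sum_eq_zero fun j hj => ?_
    simp only [Finset.mem_Icc] at hj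
    rw [Sk, Finset.Icc_eq_empty (by omega), Finset.sum_empty]
  | succ t ih =>
    rw [Finset.sum_Icc_succ_top (by omega), ih]
    push_cast
    have : ∀ j ∈ Finset.Icc 1 k,
        Sk k ((t : ℤ) + 1 - j + 1) = Sk k ((t : ℤ) - j + 1) + Fk k ((t : ℤ) + 2 - j) := by
      intro j hj
      have := sk_succ k ((t : ℤ) + 1 - j + 1)
      convert this using 3 <;> ring
    rw [Finset.sum_congr rfl this, Finset.sum_add_distrib]
    push_cast
    congr 1
    rw [fk_rec k ((t : ℤ) + 1 + 1) (by omega)]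
    exact Finset.sum_congr rfl fun j hj => by rw [show (t:ℤ)+1+1-(j:ℤ) = (t:ℤ)+2-(j:ℤ) by ring]
end

section
/- Fix an integer k ≥ 2 and let P_k(x) = x^k − x^{k−1} − x^{k−2} − ⋯ − x − 1 be the characteristic polynomial of the k-step Fibonacci sequence. Then P_k has exactly one real root φ_k with φ_k > 1, this root satisfies 1 < φ_k < 2, and every other complex root of P_k has modulus strictly less than 1; in particular φ_k is the only root of P_k of modulus greater than 1. -/
private lemma key_id {R : Type*} [CommRing R] (k : ℕ) (x : R) :
    (x - 1) * (x ^ k - ∑ j ∈ Finset.range k, x ^ j) = x ^ (k + 1) - 2 * x ^ k + 1 := by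
  linear_combination -(geom_sum_mul x k)

private lemma q_hasDerivAt (k : ℕ) (x : ℝ) :
    HasDerivAt (fun r : ℝ => r ^ (k + 1) - 2 * r ^ k + 1)
      (((k : ℝ) + 1) * x ^ k - 2 * ((k : ℝ) * x ^ (k - 1))) x := by
  have h1 := hasDerivAt_pow (k + 1) x
  have h2 := (hasDerivAt_pow k x).const_mul (2 : ℝ)
  have h := (h1.sub h2).add_const (1 : ℝ)
  simpa [mul_comm] using h

private lemma q_strictAntiOn (k : ℕ) (hk : 1 ≤ k) :
    StrictAntiOn (fun r : ℝ => r ^ (k + 1) - 2 * r ^ k + 1)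
      (Set.Icc 1 (2 * k / (k + 1))) := by
  have hcont : Continuous fun r : ℝ => r ^ (k + 1) - 2 * r ^ k + 1 := by fun_prop
  apply strictAntiOn_of_deriv_neg (convex_Icc _ _) hcont.continuousOn
  intro x hx
  rw [interior_Icc] at hx
  rw [(q_hasDerivAt k x).deriv]
  have hk1 : (1 : ℝ) ≤ (k : ℝ) := by exact_mod_cast hk
  have hx1 : (1 : ℝ) < x := hx.1
  have hx2 : x * ((k : ℝ) + 1) < 2 * k := by
    have := hx.2
    rwa [lt_div_iff₀ (by linarith : (0:ℝ) < (k:ℝ)+1)] at this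
  have hp : (0 : ℝ) < x ^ (k - 1) := pow_pos (by linarith) _
  have hxk : x ^ k = x ^ (k - 1) * x := by
    conv_lhs => rw [show k = (k - 1) + 1 from (Nat.succ_pred_eq_of_pos hk).symm]
    rw [pow_succ]
  rw [hxk]
  nlinarith [mul_pos hp (show (0 : ℝ) < 2 * (k : ℝ) - x * ((k : ℝ) + 1) by linarith)]

private lemma q_strictMonoOn (k : ℕ) (hk : 1 ≤ k) :
    StrictMonoOn (fun r : ℝ => r ^ (k + 1) - 2 * r ^ k + 1)
      (Set.Ici (2 * k / (k + 1))) := by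
  have hcont : Continuous fun r : ℝ => r ^ (k + 1) - 2 * r ^ k + 1 := by fun_prop
  apply strictMonoOn_of_deriv_pos (convex_Ici _) hcont.continuousOn
  intro x hx
  rw [interior_Ici] at hx
  rw [(q_hasDerivAt k x).deriv]
  have hk1 : (1 : ℝ) ≤ (k : ℝ) := by exact_mod_cast hk
  have hr0 : (1 : ℝ) ≤ 2 * k / (k + 1) := by
    rw [le_div_iff₀ (by linarith : (0:ℝ) < (k:ℝ)+1)]; linarith
  have hx1 : (1 : ℝ) < x := lt_of_le_of_lt hr0 hx
  have hx2 : 2 * (k : ℝ) < x * ((k : ℝ) + 1) := by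
    have h := Set.mem_Ioi.mp hx
    rwa [div_lt_iff₀ (by linarith : (0:ℝ) < (k:ℝ)+1)] at h
  have hp : (0 : ℝ) < x ^ (k - 1) := pow_pos (by linarith) _
  have hxk : x ^ k = x ^ (k - 1) * x := by
    conv_lhs => rw [show k = (k - 1) + 1 from (Nat.succ_pred_eq_of_pos hk).symm]
    rw [pow_succ]
  rw [hxk]
  nlinarith [mul_pos hp (show (0 : ℝ) < x * ((k : ℝ) + 1) - 2 * (k : ℝ) by linarith)]

private lemma root_gt_r0 (k : ℕ) (hk : 1 ≤ k) {a : ℝ} (ha1 : 1 < a)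
    (hqa : a ^ (k + 1) - 2 * a ^ k + 1 = 0) : 2 * (k : ℝ) / (k + 1) < a := by
  have hk1 : (1 : ℝ) ≤ (k : ℝ) := by exact_mod_cast hk
  have hr0 : (1 : ℝ) ≤ 2 * k / (k + 1) := by
    rw [le_div_iff₀ (by linarith : (0:ℝ) < (k:ℝ)+1)]; linarith
  by_contra h
  push_neg at h
  have h1 : (1 : ℝ) ∈ Set.Icc (1 : ℝ) (2 * k / (k + 1)) := ⟨le_refl _, hr0⟩
  have ha : a ∈ Set.Icc (1 : ℝ) (2 * k / (k + 1)) := ⟨le_of_lt ha1, h⟩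
  have := q_strictAntiOn k hk h1 ha ha1
  simp only [one_pow] at this
  nlinarith

private lemma q_root_unique (k : ℕ) (hk : 1 ≤ k) {a b : ℝ} (ha1 : 1 < a)
    (hqa : a ^ (k + 1) - 2 * a ^ k + 1 = 0) (hb1 : 1 < b)
    (hqb : b ^ (k + 1) - 2 * b ^ k + 1 = 0) : a = b := by
  have ha0 := root_gt_r0 k hk ha1 hqa
  have hb0 := root_gt_r0 k hk hb1 hqb
  exact (q_strictMonoOn k hk).injOn (le_of_lt ha0) (le_of_lt hb0) (by simp [hqa, hqb])

private lemma q_neg (k : ℕ) (hk : 1 ≤ k) {a r : ℝ} (ha1 : 1 < a)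
    (hqa : a ^ (k + 1) - 2 * a ^ k + 1 = 0) (hr1 : 1 < r) (hra : r < a) :
    r ^ (k + 1) - 2 * r ^ k + 1 < 0 := by
  have hk1 : (1 : ℝ) ≤ (k : ℝ) := by exact_mod_cast hk
  have hr0 : (1 : ℝ) ≤ 2 * k / (k + 1) := by
    rw [le_div_iff₀ (by linarith : (0:ℝ) < (k:ℝ)+1)]; linarith
  rcases le_or_gt r (2 * k / (k + 1)) with h | h
  · have h1 : (1 : ℝ) ∈ Set.Icc (1 : ℝ) (2 * k / (k + 1)) := ⟨le_refl _, hr0⟩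
    have hrmem : r ∈ Set.Icc (1 : ℝ) (2 * k / (k + 1)) := ⟨le_of_lt hr1, h⟩
    have := q_strictAntiOn k hk h1 hrmem hr1
    simp only [one_pow] at this
    nlinarith
  · have ha0 := root_gt_r0 k hk ha1 hqa
    have := q_strictMonoOn k hk (le_of_lt h) (le_of_lt (lt_trans h hra)) hra
    simp only [one_pow] at this
    nlinarith

private lemma complex_eq (k : ℕ) (z : ℂ) (r : ℝ) (hr : 0 < r)
    (habs : ‖z‖ = r)
    (hq : z ^ (k + 1) - 2 * z ^ k + 1 = 0)
    (hreal : r ^ (k + 1) - 2 * r ^ k + 1 = 0) : z = (r : ℂ) := by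
  set w : ℂ := z ^ (k + 1) with hw
  have habsw : ‖w‖ = r ^ (k + 1) := by
    rw [hw, norm_pow, habs]
  have h2 : w + 1 = 2 * z ^ k := by rw [hw]; linear_combination hq
  have habs2 : ‖w + 1‖ = ‖w‖ + 1 := by
    rw [h2, norm_mul, norm_pow, habs, habsw]
    simp only [Complex.norm_ofNat]
    linarith
  -- equality in triangle inequality forces w nonneg real
  have hsq1 : (‖w + 1‖) ^ 2 = w.re ^ 2 + w.im ^ 2 + 2 * w.re + 1 := by
    rw [Complex.sq_norm, Complex.normSq_apply]
    simp [Complex.add_re, Complex.add_im]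
    ring
  have hsq2 : (‖w‖) ^ 2 = w.re ^ 2 + w.im ^ 2 := by
    rw [Complex.sq_norm, Complex.normSq_apply]; ring
  have hre : w.re = ‖w‖ := by
    have h := congrArg (· ^ 2) habs2
    rw [hsq1, add_sq, hsq2, one_pow, mul_one] at h
    linarith
  have him : w.im = 0 := by
    have : w.im ^ 2 = 0 := by
      have := hsq2
      rw [← hre] at this
      nlinarith
    exact pow_eq_zero_iff (by norm_num) |>.mp this
  have hwr : w = ((r ^ (k + 1) : ℝ) : ℂ) := by
    apply Complex.ext
    · rw [Complex.ofReal_re, hre, habsw]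
    · rw [Complex.ofReal_im, him]
  -- deduce z ^ k = r ^ k
  have hzk : z ^ k = ((r ^ k : ℝ) : ℂ) := by
    have h3 : (2 : ℂ) * z ^ k = ((2 * r ^ k : ℝ) : ℂ) := by
      have hrealC : (r : ℂ) ^ (k + 1) - 2 * (r : ℂ) ^ k + 1 = 0 := by
        exact_mod_cast hreal
      rw [← h2, hwr]
      push_cast
      linear_combination hrealC
    have := h3
    push_cast at this ⊢
    linear_combination this / 2
  have hrk : ((r : ℂ)) ^ k ≠ 0 := pow_ne_zero _ (by exact_mod_cast hr.ne')
  have : z * (r : ℂ) ^ k = (r : ℂ) * (r : ℂ) ^ k := by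
    push_cast at hzk
    calc z * (r : ℂ) ^ k = z * z ^ k := by rw [hzk]
    _ = z ^ (k + 1) := by ring
    _ = ((r ^ (k + 1) : ℝ) : ℂ) := hwr
    _ = (r : ℂ) * (r : ℂ) ^ k := by push_cast; ring
  exact mul_right_cancel₀ hrk this

/-- The characteristic polynomial `P_k(x) = x^k - x^(k-1) - ⋯ - x - 1` of the
k-step Fibonacci sequence has exactly one real root `φ_k` greater than 1; this root
satisfies `1 < φ_k < 2`, and every other complex root of `P_k` has modulus strictly
less than 1. In particular `φ_k` is the only root of `P_k` of modulus greater
than 1. -/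
theorem k_step_fibonacci_constant (k : ℕ) (hk : 2 ≤ k) :
    ∃ φ : ℝ, 1 < φ ∧ φ < 2 ∧
      (φ ^ k - ∑ j ∈ Finset.range k, φ ^ j = 0) ∧
      (∀ x : ℝ, 1 < x → x ^ k - ∑ j ∈ Finset.range k, x ^ j = 0 → x = φ) ∧
      (∀ z : ℂ, z ^ k - ∑ j ∈ Finset.range k, z ^ j = 0 → z ≠ (φ : ℂ) →
        ‖z‖ < 1) ∧
      (∀ z : ℂ, z ^ k - ∑ j ∈ Finset.range k, z ^ j = 0 → 1 < ‖z‖ →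
        z = (φ : ℂ)) := by
  have hk1 : 1 ≤ k := le_trans one_le_two hk
  have hkR : (2 : ℝ) ≤ (k : ℝ) := by exact_mod_cast hk
  -- existence via IVT
  have hcont : ContinuousOn (fun x : ℝ => x ^ k - ∑ j ∈ Finset.range k, x ^ j)
      (Set.Icc 1 2) :=
    ((continuous_pow k).sub (continuous_finset_sum _ fun i _ => continuous_pow i)).continuousOn
  have hf1 : (1 : ℝ) ^ k - ∑ j ∈ Finset.range k, (1 : ℝ) ^ j < 0 := by
    simp only [one_pow, Finset.sum_const, Finset.card_range, nsmul_eq_mul, mul_one]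
    linarith
  have hf2 : (0 : ℝ) < (2 : ℝ) ^ k - ∑ j ∈ Finset.range k, (2 : ℝ) ^ j := by
    have h := key_id k (2 : ℝ)
    have hp : (2 : ℝ) ^ (k + 1) = 2 * 2 ^ k := by rw [pow_succ]; ring
    nlinarith [h]
  obtain ⟨φ, hφmem, hφeq⟩ := intermediate_value_Ioo one_le_two hcont
    (Set.mem_Ioo.mpr ⟨hf1, hf2⟩)
  obtain ⟨hφ1, hφ2⟩ := hφmem
  have hφroot : φ ^ k - ∑ j ∈ Finset.range k, φ ^ j = 0 := hφeq
  have hqφ : φ ^ (k + 1) - 2 * φ ^ k + 1 = 0 := by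
    rw [← key_id k φ, hφroot, mul_zero]
  -- uniqueness of the real root > 1
  have huniq : ∀ x : ℝ, 1 < x → x ^ k - ∑ j ∈ Finset.range k, x ^ j = 0 → x = φ := by
    intro x hx1 hxroot
    have hqx : x ^ (k + 1) - 2 * x ^ k + 1 = 0 := by
      rw [← key_id k x, hxroot, mul_zero]
    exact q_root_unique k hk1 hx1 hqx hφ1 hqφ
  -- all other complex roots have modulus < 1
  have hb1 : ∀ z : ℂ, z ^ k - ∑ j ∈ Finset.range k, z ^ j = 0 → z ≠ (φ : ℂ) →
      ‖z‖ < 1 := by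
    intro z hz hne
    by_contra hcon
    push_neg at hcon
    set r : ℝ := ‖z‖ with hrdef
    have hqz : z ^ (k + 1) - 2 * z ^ k + 1 = 0 := by
      rw [← key_id k z, hz, mul_zero]
    have hzk : z ^ k = ∑ j ∈ Finset.range k, z ^ j := by linear_combination hz
    have htri : r ^ k ≤ ∑ j ∈ Finset.range k, r ^ j := by
      have h1 : ‖z ^ k‖ ≤ ∑ j ∈ Finset.range k, ‖z ^ j‖ := by
        rw [hzk]; exact norm_sum_le _ _
      simpa [norm_pow] using h1
    have hqr_le : r ^ (k + 1) - 2 * r ^ k + 1 ≤ 0 := by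
      nlinarith [key_id k r, mul_nonneg (by linarith : (0:ℝ) ≤ r - 1)
        (by linarith : (0:ℝ) ≤ (∑ j ∈ Finset.range k, r ^ j) - r ^ k)]
    have hqr_ge : (0 : ℝ) ≤ r ^ (k + 1) - 2 * r ^ k + 1 := by
      have h2 : z ^ (k + 1) + 1 = 2 * z ^ k := by linear_combination hqz
      have heq : (2 : ℝ) * r ^ k = ‖z ^ (k + 1) + 1‖ := by
        rw [h2, norm_mul, norm_pow]
        simp [hrdef]
      have htr2 : ‖z ^ (k + 1) + 1‖ ≤ r ^ (k + 1) + 1 := by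
        calc ‖z ^ (k + 1) + 1‖
            ≤ ‖z ^ (k + 1)‖ + ‖(1 : ℂ)‖ := norm_add_le _ _
          _ = r ^ (k + 1) + 1 := by simp [norm_pow, hrdef]
      linarith
    have hqr0 : r ^ (k + 1) - 2 * r ^ k + 1 = 0 := le_antisymm hqr_le hqr_ge
    have hrpos : 0 < r := lt_of_lt_of_le one_pos hcon
    have hz_eq : z = (r : ℂ) := complex_eq k z r hrpos rfl hqz hqr0
    rcases eq_or_lt_of_le hcon with h1 | h1
    · have hz1 : z = 1 := by rw [hz_eq, ← h1]; norm_num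
      rw [hz1] at hz
      have hsum : ∑ j ∈ Finset.range k, (1 : ℂ) ^ j = (k : ℂ) := by simp
      rw [hsum, one_pow] at hz
      have hk1' : (k : ℂ) = 1 := by linear_combination -hz
      have : k = 1 := by exact_mod_cast hk1'
      omega
    · have hrφ : r = φ := q_root_unique k hk1 h1 hqr0 hφ1 hqφ
      exact hne (by rw [hz_eq, hrφ])
  refine ⟨φ, hφ1, hφ2, hφroot, huniq, hb1, ?_⟩
  intro z hz habs
  by_contra hne
  have := hb1 z hz hne
  linarith
end
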